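/- Let f₁,…,f_r: ℂⁿ → ℂ, ε > 0, δ > 0 with ξ = δ/ε. Define F(x,y) = Σᵢ yᵢfᵢ(x) and let M = {(x,y) : ‖x‖ ≤ ε, |yᵢ| ≤ ε ∀i, F(x,y) = δ}. Then the image of M under the projection π(x,y) = x equals {x : ‖x‖ ≤ ε, Σᵢ |fᵢ(x)| ≥ ξ}. -/

import Mathlib

theorem stmt7 (n r : ℕ) (f : Fin r → EuclideanSpace ℂ (Fin n) → ℂ)
    (ε δ : ℝ) (hε : 0 < ε) (hδ : 0 < δ) (ξ : ℝ) (hξ : ξ = δ / ε) :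
    (fun p : EuclideanSpace ℂ (Fin n) × (Fin r → ℂ) => p.1) ''
        {p : EuclideanSpace ℂ (Fin n) × (Fin r → ℂ) |
          ‖p.1‖ ≤ ε ∧ (∀ i, ‖p.2 i‖ ≤ ε) ∧ ∑ i, p.2 i * f i p.1 = (δ : ℂ)} =
      {x : EuclideanSpace ℂ (Fin n) | ‖x‖ ≤ ε ∧ ξ ≤ ∑ i, ‖f i x‖} := by
  ext x
  simp only [Set.mem_image, Set.mem_setOf_eq]
  constructor
  · rintro ⟨⟨x', y⟩, ⟨hx, hy, hF⟩, rfl⟩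
    refine ⟨hx, ?_⟩
    have h1 : δ ≤ ∑ i, ‖y i‖ * ‖f i x'‖ := by
      calc δ = ‖∑ i, y i * f i x'‖ := by rw [hF]; simp [abs_of_pos hδ]
        _ ≤ ∑ i, ‖y i * f i x'‖ := by
            exact norm_sum_le _ _
        _ = ∑ i, ‖y i‖ * ‖f i x'‖ := by simp [map_mul]
    have h2 : ∑ i, ‖y i‖ * ‖f i x'‖ ≤
        ε * ∑ i, ‖f i x'‖ := by
      rw [Finset.mul_sum]
      exact Finset.sum_le_sum fun i _ =>
        mul_le_mul_of_nonneg_right (hy i) (norm_nonneg _)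
    rw [hξ, div_le_iff₀ hε]
    linarith [mul_comm ε (∑ i, ‖f i x'‖)]
  · rintro ⟨hx, hs⟩
    set s : ℝ := ∑ i, ‖f i x‖ with hsdef
    have hξpos : 0 < ξ := hξ ▸ div_pos hδ hε
    have hspos : 0 < s := lt_of_lt_of_le hξpos hs
    refine ⟨(x, fun i => ((δ / s : ℝ) : ℂ) * (starRingEnd ℂ (f i x)) /
      ((‖f i x‖ : ℝ) : ℂ)), ⟨hx, ?_, ?_⟩, rfl⟩
    · intro i
      rcases eq_or_ne (f i x) 0 with h | h
      · simp [h]; positivity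
      · have habs : (0:ℝ) < ‖f i x‖ := by
          simpa using (norm_pos_iff.mpr h)
        rw [norm_div, norm_mul]
        simp only [Complex.norm_real, Real.norm_eq_abs, Complex.norm_conj]
        rw [abs_of_nonneg (by positivity : (0:ℝ) ≤ δ / s), abs_of_pos habs]
        rw [mul_div_assoc, div_self habs.ne', mul_one]
        rw [div_le_iff₀ hspos]
        calc δ ≤ ε * ξ := by rw [hξ]; field_simp; exact le_rfl
          _ ≤ ε * s := by nlinarith
    · have hterm : ∀ i, ((δ / s : ℝ) : ℂ) * (starRingEnd ℂ (f i x)) /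
          ((‖f i x‖ : ℝ) : ℂ) * f i x = ((δ / s * ‖f i x‖ : ℝ) : ℂ) := by
        intro i
        rcases eq_or_ne (f i x) 0 with h | h
        · simp [h]
        · have habs : ((‖f i x‖ : ℝ) : ℂ) ≠ 0 := by
            simpa using (norm_ne_zero_iff.mpr h)
          have hz : (starRingEnd ℂ) (f i x) * f i x =
              ((‖f i x‖ : ℝ) : ℂ) * ((‖f i x‖ : ℝ) : ℂ) := by
            rw [mul_comm, Complex.mul_conj, ← Complex.sq_norm]
            push_cast
            ring
          field_simp
          rw [mul_assoc, hz]
          push_cast; ring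
      rw [Finset.sum_congr rfl fun i _ => hterm i]
      rw [← Complex.ofReal_sum]
      rw [← Finset.mul_sum, ← hsdef]
      rw [div_mul_cancel₀ _ hspos.ne']
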